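/- For every x ∈ ℝ⁴ with x ≠ 0, the integral of 1/(‖x-y‖²(1+‖y‖⁴)) over the ball {y ∈ ℝ⁴ : ‖y‖ ≤ ‖x‖/2} satisfies ∫_{‖y‖ ≤ ‖x‖/2} dy/(‖x-y‖²(1+‖y‖⁴)) ≤ 2π² ‖x‖^{-2} log(1 + ‖x‖⁴/16). -/

import Mathlib

open MeasureTheory Real
open Set

noncomputable abbrev E4 := EuclideanSpace ℝ (Fin 4)

lemma vol_unit_ball : (volume (Metric.ball (0 : E4) 1)).toReal = π ^ 2 / 2 := by
  rw [EuclideanSpace.volume_ball]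
  simp only [Fintype.card_fin]
  rw [ENNReal.toReal_mul]
  have h3 : ((4:ℕ) : ℝ) / 2 + 1 = 3 := by norm_num
  rw [h3]
  have hg : Real.Gamma 3 = 2 := by
    have := Real.Gamma_nat_eq_factorial 2
    norm_num at this
    simpa using this
  have hs : Real.sqrt π ^ 4 = π ^ 2 := by
    rw [show (4:ℕ) = 2 * 2 from rfl, pow_mul, Real.sq_sqrt Real.pi_pos.le]
  rw [hg, hs]
  rw [ENNReal.toReal_ofReal (by positivity : (0:ℝ) ≤ π ^ 2 / 2)]
  simp

lemma radial_int (R : ℝ) :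
    ∫ r in (0:ℝ)..R, r ^ 3 / (1 + r ^ 4) = (1/4) * Real.log (1 + R ^ 4) := by
  have key : ∀ r : ℝ, HasDerivAt (fun t : ℝ => (1/4) * Real.log (1 + t ^ 4))
      (r ^ 3 / (1 + r ^ 4)) r := by
    intro r
    have h1 : (0:ℝ) < 1 + r ^ 4 := by positivity
    have h2 : HasDerivAt (fun t : ℝ => 1 + t ^ 4) (4 * r ^ 3) r := by
      simpa using (hasDerivAt_pow 4 r).const_add 1
    have h3 := ((Real.hasDerivAt_log h1.ne').comp r h2).const_mul (1/4 : ℝ)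
    refine h3.congr_deriv ?_
    ring
  have hcont : Continuous fun r : ℝ => r ^ 3 / (1 + r ^ 4) :=
    (continuous_pow 3).div (by continuity) (fun r => by positivity)
  rw [intervalIntegral.integral_eq_sub_of_hasDerivAt (fun r _ => key r)
    (hcont.intervalIntegrable 0 R)]
  simp

lemma ball_int (R : ℝ) (hR : 0 < R) :
    ∫ y in Metric.closedBall (0 : E4) R, 1 / (1 + ‖y‖ ^ 4)
      = (π ^ 2 / 2) * Real.log (1 + R ^ 4) := by
  set f : ℝ → ℝ := fun r => if r ≤ R then 1 / (1 + r ^ 4) else 0 with hf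
  have h1 : ∫ y in Metric.closedBall (0 : E4) R, 1 / (1 + ‖y‖ ^ 4)
      = ∫ y : E4, f ‖y‖ := by
    rw [← integral_indicator measurableSet_closedBall]
    congr 1
    ext y
    simp only [indicator, Metric.mem_closedBall, dist_zero_right, hf]
  rw [h1, integral_fun_norm_addHaar volume f]
  have hdim : Module.finrank ℝ E4 = 4 := by simp [finrank_euclideanSpace]
  rw [hdim]
  have h2 : ∫ r in Ioi (0:ℝ), r ^ (4 - 1) • f r
      = ∫ r in (0:ℝ)..R, r ^ 3 / (1 + r ^ 4) := by
    rw [intervalIntegral.integral_of_le hR.le,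
      show (4 - 1 : ℕ) = 3 from rfl]
    rw [setIntegral_congr_fun measurableSet_Ioi
      (g := fun r => Set.indicator (Ioc 0 R) (fun r => r ^ 3 / (1 + r ^ 4)) r) ?_,
      setIntegral_indicator measurableSet_Ioc, Set.inter_eq_right.mpr Ioc_subset_Ioi_self]
    intro r hr
    simp only [indicator, mem_Ioc, hf, smul_eq_mul]
    split_ifs with h h2 h3
    · rw [mul_one_div]
    · exact absurd ⟨hr, h⟩ h2
    · exact absurd h3.2 h
    · simp
  rw [h2, radial_int, measureReal_def, vol_unit_ball]
  simp only [smul_eq_mul, nsmul_eq_mul]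
  push_cast
  ring

/-- The estimate for the first term in the decomposition used in the proof of
Proposition 4.1: the integral of `1/(‖x-y‖²(1+‖y‖⁴))` over the ball of radius `‖x‖/2`
centered at the origin is at most `2π² ‖x‖⁻² log(1 + ‖x‖⁴/16)`. -/
theorem firstTerm_estimate (x : EuclideanSpace ℝ (Fin 4)) (hx : x ≠ 0) :
    ∫ y in Metric.closedBall (0 : EuclideanSpace ℝ (Fin 4)) (‖x‖ / 2),
        1 / (‖x - y‖ ^ 2 * (1 + ‖y‖ ^ 4))
      ≤ 2 * π ^ 2 * ‖x‖⁻¹ ^ 2 * Real.log (1 + ‖x‖ ^ 4 / 16) := by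
  have hxn : (0:ℝ) < ‖x‖ := norm_pos_iff.mpr hx
  set R : ℝ := ‖x‖ / 2 with hRdef
  have hR : 0 < R := by positivity
  have hdist : ∀ y ∈ Metric.closedBall (0 : E4) R, R ≤ ‖x - y‖ := by
    intro y hy
    rw [Metric.mem_closedBall, dist_zero_right] at hy
    calc R = ‖x‖ - R := by rw [hRdef]; ring
    _ ≤ ‖x‖ - ‖y‖ := by linarith
    _ ≤ ‖x - y‖ := norm_sub_norm_le x y
  -- pointwise bound
  have hpt : ∀ y ∈ Metric.closedBall (0 : E4) R,
      1 / (‖x - y‖ ^ 2 * (1 + ‖y‖ ^ 4)) ≤ (1 / R ^ 2) * (1 / (1 + ‖y‖ ^ 4)) := by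
    intro y hy
    rw [one_div, one_div, one_div, ← mul_inv]
    apply inv_anti₀ (by positivity)
    exact mul_le_mul_of_nonneg_right (pow_le_pow_left₀ hR.le (hdist y hy) 2) (by positivity)
  -- integrability
  have hcont2 : Continuous fun y : E4 => (1 / R ^ 2) * (1 / (1 + ‖y‖ ^ 4)) := by
    apply Continuous.mul continuous_const
    exact continuous_const.div (by continuity) (fun y => by positivity)
  have hint2 : IntegrableOn (fun y : E4 => (1 / R ^ 2) * (1 / (1 + ‖y‖ ^ 4)))
      (Metric.closedBall 0 R) := hcont2.continuousOn.integrableOn_compact (isCompact_closedBall _ _)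
  have hint1 : IntegrableOn (fun y : E4 => 1 / (‖x - y‖ ^ 2 * (1 + ‖y‖ ^ 4)))
      (Metric.closedBall 0 R) := by
    apply ContinuousOn.integrableOn_compact (isCompact_closedBall _ _)
    apply ContinuousOn.div continuousOn_const
    · exact ((continuous_const.sub continuous_id).norm.pow 2).continuousOn.mul
        (by continuity : Continuous fun y : E4 => 1 + ‖y‖ ^ 4).continuousOn
    · intro y hy
      have h0 : 0 < ‖x - y‖ := lt_of_lt_of_le hR (hdist y hy)
      positivity
  calc ∫ y in Metric.closedBall (0 : E4) R, 1 / (‖x - y‖ ^ 2 * (1 + ‖y‖ ^ 4))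
      ≤ ∫ y in Metric.closedBall (0 : E4) R, (1 / R ^ 2) * (1 / (1 + ‖y‖ ^ 4)) :=
        setIntegral_mono_on hint1 hint2 measurableSet_closedBall hpt
    _ = (1 / R ^ 2) * ∫ y in Metric.closedBall (0 : E4) R, 1 / (1 + ‖y‖ ^ 4) :=
        integral_const_mul _ _
    _ = (1 / R ^ 2) * ((π ^ 2 / 2) * Real.log (1 + R ^ 4)) := by rw [ball_int R hR]
    _ = 2 * π ^ 2 * ‖x‖⁻¹ ^ 2 * Real.log (1 + ‖x‖ ^ 4 / 16) := by
        have h4 : R ^ 4 = ‖x‖ ^ 4 / 16 := by rw [hRdef]; ring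
        rw [h4, hRdef]
        field_simp
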